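/- Let p be a prime, m and n nonnegative integers with base-p digit expansions m = Σ_{i=0}^{j} m_i p^i and n = Σ_{i=0}^{j} n_i p^i where 0 ≤ m_i, n_i ≤ p−1. Then C(m, n) ≡ Π_{i=0}^{j} C(m_i, n_i) (mod p). -/

import Mathlib

lemma sum_digits_lt (p : ℕ) (hp : 1 < p) (a : ℕ) (d : ℕ → ℕ) (hd : ∀ i < a, d i < p) :
    ∑ i ∈ Finset.range a, d i * p ^ i < p ^ a := by
  induction a with
  | zero => simp
  | succ a ih =>
    rw [Finset.sum_range_succ, pow_succ]
    have h1 : ∑ i ∈ Finset.range a, d i * p ^ i < p ^ a :=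
      ih (fun i hi => hd i (hi.trans (Nat.lt_succ_self a)))
    have h2 : d a * p ^ a ≤ (p - 1) * p ^ a :=
      Nat.mul_le_mul_right _ (Nat.le_sub_one_of_lt (hd a (Nat.lt_succ_self a)))
    calc ∑ i ∈ Finset.range a, d i * p ^ i + d a * p ^ a
        < p ^ a + (p - 1) * p ^ a := Nat.add_lt_add_of_lt_of_le h1 h2
      _ = p ^ a * p := by
          rw [Nat.sub_one_mul, ← Nat.add_sub_assoc (Nat.le_mul_of_pos_left _ (by omega))]
          rw [Nat.add_sub_cancel_left, mul_comm]

lemma digit_extract (p : ℕ) (hp : 1 < p) (a k : ℕ) (hk : k < a) (d : ℕ → ℕ)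
    (hd : ∀ i < a, d i < p) :
    (∑ i ∈ Finset.range a, d i * p ^ i) / p ^ k % p = d k := by
  have hsplit : ∑ i ∈ Finset.range a, d i * p ^ i =
      (∑ i ∈ Finset.range k, d i * p ^ i) + ∑ i ∈ Finset.Ico k a, d i * p ^ i := by
    rw [Finset.range_eq_Ico, Finset.range_eq_Ico,
      Finset.sum_Ico_consecutive _ (Nat.zero_le k) hk.le]
  have hre : ∑ i ∈ Finset.Ico k a, d i * p ^ i =
      p ^ k * ∑ i ∈ Finset.range (a - k), d (k + i) * p ^ i := by
    rw [Finset.sum_Ico_eq_sum_range, Finset.mul_sum]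
    apply Finset.sum_congr rfl
    intro i _
    rw [pow_add]
    ring
  have hA : ∑ i ∈ Finset.range k, d i * p ^ i < p ^ k :=
    sum_digits_lt p hp k d (fun i hi => hd i (hi.trans hk))
  obtain ⟨b, hb⟩ : ∃ b, a - k = b + 1 := ⟨a - k - 1, by omega⟩
  have hpeel : ∑ i ∈ Finset.range (a - k), d (k + i) * p ^ i =
      d k + p * ∑ i ∈ Finset.range b, d (k + (i + 1)) * p ^ i := by
    rw [hb, Finset.sum_range_succ', Finset.mul_sum]
    simp only [pow_zero, mul_one, pow_succ]
    rw [add_comm]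
    congr 1
    apply Finset.sum_congr rfl
    intro i _
    ring
  rw [hsplit, hre, hpeel]
  rw [Nat.add_mul_div_left _ _ (pow_pos (by omega) k),
    Nat.div_eq_of_lt hA, zero_add, Nat.add_mul_mod_self_left,
    Nat.mod_eq_of_lt (hd k hk)]

theorem stmt_1 (p : ℕ) (hp : p.Prime) (j : ℕ) (m n : ℕ) (mi ni : ℕ → ℕ)
    (hmi : ∀ i ≤ j, mi i ≤ p - 1) (hni : ∀ i ≤ j, ni i ≤ p - 1)
    (hm : m = ∑ i ∈ Finset.range (j + 1), mi i * p ^ i)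
    (hn : n = ∑ i ∈ Finset.range (j + 1), ni i * p ^ i) :
    Nat.choose m n ≡ ∏ i ∈ Finset.range (j + 1), Nat.choose (mi i) (ni i) [MOD p] := by
  have hp1 : 1 < p := hp.one_lt
  have hmd : ∀ i < j + 1, mi i < p := fun i hi => by
    have := hmi i (Nat.lt_succ_iff.mp hi); omega
  have hnd : ∀ i < j + 1, ni i < p := fun i hi => by
    have := hni i (Nat.lt_succ_iff.mp hi); omega
  have hmlt : m < p ^ (j + 1) := hm ▸ sum_digits_lt p hp1 _ mi hmd
  have hnlt : n < p ^ (j + 1) := hn ▸ sum_digits_lt p hp1 _ ni hnd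
  have : Fact p.Prime := ⟨hp⟩
  have h := Choose.choose_modEq_prod_range_choose_nat (p := p) hmlt hnlt
  refine h.trans (Nat.ModEq.refl _ |>.trans ?_)
  have heq : ∏ i ∈ Finset.range (j + 1), Nat.choose (m / p ^ i % p) (n / p ^ i % p) =
      ∏ i ∈ Finset.range (j + 1), Nat.choose (mi i) (ni i) := by
    apply Finset.prod_congr rfl
    intro i hi
    rw [hm, hn, digit_extract p hp1 _ i (Finset.mem_range.mp hi) mi hmd,
      digit_extract p hp1 _ i (Finset.mem_range.mp hi) ni hnd]
  rw [heq]
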